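/- For every n ≥ 1 there exists a unique unital K-algebra homomorphism E_n : TLhat_{n+1}(q) → TL_n(q) with E_n(g_{σ_i}) = g_{σ_i} for 1 ≤ i ≤ n and E_n(g_{a_{n+1}}) = g_{σ_1}⋯g_{σ_{n−1}}g_{σ_n}g_{σ_{n−1}}^{−1}⋯g_{σ_1}^{−1}. Moreover: E_n is surjective; the composition of the canonical homomorphism TL_n(q) → TLhat_{n+1}(q) (g_{σ_i} ↦ g_{σ_i}) with E_n is the identity of TL_n(q); and for n ≥ 2 one has E_n ∘ F_n = ι_n ∘ E_{n−1}, where ι_n : TL_{n−1}(q) → TL_n(q) is the canonical homomorphism g_{σ_i} ↦ g_{σ_i}. -/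

import Mathlib

namespace AffineTL

open FreeAlgebra

/-- Cyclic successor on `Fin m`. -/
def csucc {m : ℕ} (i : Fin m) : Fin m := ⟨(i.val + 1) % m, Nat.mod_lt _ i.pos⟩

/-- The defining relations of the affine Temperley–Lieb algebra `TLhat_m(q)` with `m`
generators (indexed so that `g_{σ_i}` has index `i - 1` and `g_{a_m}` has index `m - 1`).
For `m = 1` the unique generator is set to `0`, so that `TLhat_1(q) ≅ K`. -/
inductive ATLRel {K : Type*} [CommRing K] (q : K) (m : ℕ) :
    FreeAlgebra K (Fin m) → FreeAlgebra K (Fin m) → Prop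
  | degen (h : m ≤ 1) (i : Fin m) : ATLRel q m (ι K i) 0
  | quad (h : 2 ≤ m) (i : Fin m) :
      ATLRel q m (ι K i * ι K i) ((q - 1) • ι K i + algebraMap K _ q)
  | comm (h : 3 ≤ m) (i j : Fin m) (h1 : i ≠ j) (h2 : j ≠ csucc i) (h3 : i ≠ csucc j) :
      ATLRel q m (ι K i * ι K j) (ι K j * ι K i)
  | braid (h : 3 ≤ m) (i : Fin m) :
      ATLRel q m (ι K i * ι K (csucc i) * ι K i) (ι K (csucc i) * ι K i * ι K (csucc i))
  | vrel (h : 3 ≤ m) (i : Fin m) :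
      ATLRel q m (ι K i * ι K (csucc i) * ι K i + ι K i * ι K (csucc i) + ι K (csucc i) * ι K i
        + ι K i + ι K (csucc i) + 1) 0

/-- The affine Temperley–Lieb algebra `TLhat_m(q)` of type `Ã`. -/
abbrev ATL (K : Type*) [CommRing K] (q : K) (m : ℕ) : Type _ := RingQuot (ATLRel q m)

/-- The generators of `TLhat_m(q)`. -/
noncomputable def g {K : Type*} [CommRing K] (q : K) (m : ℕ) (i : Fin m) : ATL K q m :=
  RingQuot.mkAlgHom K (ATLRel q m) (ι K i)

/-- The defining relations of the type `A` Temperley–Lieb algebra `TL_n(q)` with `n`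
generators (`g_{σ_i}` has index `i - 1`). -/
inductive TLARel {K : Type*} [CommRing K] (q : K) (n : ℕ) :
    FreeAlgebra K (Fin n) → FreeAlgebra K (Fin n) → Prop
  | quad (i : Fin n) :
      TLARel q n (ι K i * ι K i) ((q - 1) • ι K i + algebraMap K _ q)
  | comm (i j : Fin n) (h : i.val + 2 ≤ j.val ∨ j.val + 2 ≤ i.val) :
      TLARel q n (ι K i * ι K j) (ι K j * ι K i)
  | braid (i j : Fin n) (h : j.val = i.val + 1) :
      TLARel q n (ι K i * ι K j * ι K i) (ι K j * ι K i * ι K j)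
  | vrel (i j : Fin n) (h : j.val = i.val + 1) :
      TLARel q n (ι K i * ι K j * ι K i + ι K i * ι K j + ι K j * ι K i
        + ι K i + ι K j + 1) 0

/-- The type `A` Temperley–Lieb algebra `TL_n(q)`. -/
abbrev TLA (K : Type*) [CommRing K] (q : K) (n : ℕ) : Type _ := RingQuot (TLARel q n)

/-- The generators of `TL_n(q)`. -/
noncomputable def gA {K : Type*} [CommRing K] (q : K) (n : ℕ) (i : Fin n) : TLA K q n :=
  RingQuot.mkAlgHom K (TLARel q n) (ι K i)

/-- The formal inverse `q⁻¹·(x − (q−1))` of an element satisfying `x² = (q−1)x + q`. -/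
noncomputable def qinv {K : Type*} [CommRing K] (q : K) {A : Type*} [Ring A] [Algebra K A]
    (x : A) : A :=
  Ring.inverse q • (x - algebraMap K A (q - 1))

/-- A trace on a `K`-algebra: a `K`-linear form vanishing on commutators. -/
def IsTrace {K : Type*} [CommRing K] {A : Type*} [Ring A] [Algebra K A]
    (τ : A →ₗ[K] K) : Prop :=
  ∀ x y : A, τ (x * y) = τ (y * x)

/-- The element `G = g_{σ_n}⋯g_{σ_1}·g_{a_{n+1}}` of `TLhat_{n+1}(q)`. -/
noncomputable def bigG {K : Type*} [CommRing K] (q : K) (n : ℕ) : ATL K q (n + 1) :=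
  (List.ofFn fun j : Fin n => g q (n + 1) ⟨n - 1 - j.val, by omega⟩).prod *
    g q (n + 1) (Fin.last n)

/-- The inverse `G⁻¹ = g_{a_{n+1}}⁻¹·g_{σ_1}⁻¹⋯g_{σ_n}⁻¹` of `bigG`. -/
noncomputable def bigGinv {K : Type*} [CommRing K] (q : K) (n : ℕ) : ATL K q (n + 1) :=
  qinv q (g q (n + 1) (Fin.last n)) *
    (List.ofFn fun j : Fin n => qinv q (g q (n + 1) j.castSucc)).prod

end AffineTL

namespace AffineTL

/-- `F` is the canonical homomorphism `F_m : TLhat_m(q) → TLhat_{m+1}(q)`: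
`t_{σ_i} ↦ g_{σ_i}` for `1 ≤ i ≤ m−1` and `t_{a_m} ↦ g_{σ_m}·g_{a_{m+1}}·g_{σ_m}⁻¹`. -/
def isF {K : Type*} [CommRing K] (q : K) (m : ℕ) (hm : 2 ≤ m)
    (F : ATL K q m →ₐ[K] ATL K q (m + 1)) : Prop :=
  (∀ i : ℕ, ∀ hi : i < m - 1,
      F (g q m ⟨i, by omega⟩) = g q (m + 1) ⟨i, by omega⟩) ∧
  F (g q m ⟨m - 1, by omega⟩) =
    g q (m + 1) ⟨m - 1, by omega⟩ * g q (m + 1) ⟨m, by omega⟩ *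
      qinv q (g q (m + 1) ⟨m - 1, by omega⟩)

end AffineTL

namespace AffineTL

/-- `E` is the canonical surjection `E_n : TLhat_{n+1}(q) → TL_n(q)`:
`g_{σ_i} ↦ g_{σ_i}` for `1 ≤ i ≤ n` and
`g_{a_{n+1}} ↦ g_{σ_1}⋯g_{σ_{n−1}}·g_{σ_n}·g_{σ_{n−1}}⁻¹⋯g_{σ_1}⁻¹`. -/
def isE {K : Type*} [CommRing K] (q : K) (n : ℕ) (hn : 1 ≤ n)
    (E : ATL K q (n + 1) →ₐ[K] TLA K q n) : Prop :=
  (∀ i : Fin n, E (g q (n + 1) i.castSucc) = gA q n i) ∧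
  E (g q (n + 1) (Fin.last n)) =
    (List.ofFn fun j : Fin (n - 1) => gA q n ⟨j.val, by omega⟩).prod *
      gA q n ⟨n - 1, by omega⟩ *
      (List.ofFn fun j : Fin (n - 1) => qinv q (gA q n ⟨n - 2 - j.val, by omega⟩)).prod

end AffineTL



section GroupLemmas
variable {G : Type*} [Group G] (a b B : G)

theorem braid_conj (h : a * b * a = b * a * b) : a * b * a⁻¹ = b⁻¹ * a * b := by
  calc a * b * a⁻¹ = b⁻¹ * (b * a * b) * a⁻¹ := by group
    _ = b⁻¹ * (a * b * a) * a⁻¹ := by rw [h]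
    _ = b⁻¹ * a * b := by group

theorem braid_conj_inv (h : a * b * a = b * a * b) : a * b⁻¹ * a⁻¹ = b⁻¹ * a⁻¹ * b := by
  have h2 := congrArg (·⁻¹) (braid_conj a b h)
  simp only [mul_inv_rev, inv_inv] at h2
  simpa [mul_assoc] using h2

theorem braid_top_base (h : a * b * a = b * a * b) :
    b * (a * b * a⁻¹) * b = (a * b * a⁻¹) * b * (a * b * a⁻¹) := by
  have hc := braid_conj a b h
  rw [hc]
  calc b * (b⁻¹ * a * b) * b = a * b * b := by group
    _ = b⁻¹ * (b * a * b) * b := by group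
    _ = b⁻¹ * (a * b * a) * b := by rw [h]
    _ = (b⁻¹ * a * b) * b * (b⁻¹ * a * b) := by group

theorem braid_bottom_base (h : a * b * a = b * a * b) :
    (b⁻¹ * a * b) * a * (b⁻¹ * a * b) = a * (b⁻¹ * a * b) * a := by
  -- here roles: a is the "bottom" generator c, b the next one; h : a b a = b a b
  have hc := braid_conj a b h   -- a * b * a⁻¹ = b⁻¹ * a * b
  rw [← hc]
  calc (a * b * a⁻¹) * a * (a * b * a⁻¹) = a * (b * a * b) * a⁻¹ := by group
    _ = a * (a * b * a) * a⁻¹ := by rw [h]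
    _ = a * (a * b * a⁻¹) * a := by group

theorem braid_square (h : a * b * a = b * a * b) : a * (b * a * b⁻¹) * a⁻¹ = b := by
  have hc := braid_conj b a h.symm  -- b * a * b⁻¹ = a⁻¹ * b * a
  rw [hc]
  group

theorem braid_comm_step (h : a * b * a = b * a * b) (hB : a * B = B * a) :
    b * (a * (b * B * b⁻¹) * a⁻¹) = (a * (b * B * b⁻¹) * a⁻¹) * b := by
  have hinv := braid_conj_inv a b h
  calc b * (a * (b * B * b⁻¹) * a⁻¹) = (b * a * b) * B * (b⁻¹ * a⁻¹) := by group
    _ = (a * b * a) * B * (b⁻¹ * a⁻¹) := by rw [← h]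
    _ = (a * b) * (a * B) * (b⁻¹ * a⁻¹) := by group
    _ = (a * b) * (B * a) * (b⁻¹ * a⁻¹) := by rw [hB]
    _ = (a * b) * B * (a * b⁻¹ * a⁻¹) := by group
    _ = (a * b) * B * (b⁻¹ * a⁻¹ * b) := by rw [hinv]
    _ = (a * (b * B * b⁻¹) * a⁻¹) * b := by group
end GroupLemmas

section AlgLemmas
variable {K : Type*} [CommRing K] {A : Type*} [Ring A] [Algebra K A]

/-- The noncommutative polynomial appearing in the `vrel` relations. -/
def Lel (x y : A) : A := x * y * x + x * y + y * x + x + y + 1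

theorem Lel_conj (w : Aˣ) (x y : A) :
    Lel ((w : A) * x * (↑w⁻¹ : A)) ((w : A) * y * (↑w⁻¹ : A)) = (w : A) * Lel x y * (↑w⁻¹ : A) := by
  simp only [Lel, mul_add, add_mul, mul_one, one_mul, mul_assoc,
    Units.inv_mul_cancel_left, Units.mul_inv_cancel_left, Units.mul_inv, Units.inv_mul]

theorem Lel_symm {x y : A} (h : x * y * x = y * x * y) : Lel x y = Lel y x := by
  simp only [Lel, h]; abel

theorem conj_quad (q : K) (w : Aˣ) {x : A} (hx : x * x = (q - 1) • x + algebraMap K A q) :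
    ((w : A) * x * ↑w⁻¹) * ((w : A) * x * ↑w⁻¹)
      = (q - 1) • ((w : A) * x * ↑w⁻¹) + algebraMap K A q := by
  have : ((w : A) * x * ↑w⁻¹) * ((w : A) * x * ↑w⁻¹) = (w : A) * (x * x) * ↑w⁻¹ := by
    simp [mul_assoc, Units.inv_mul_cancel_left]
  rw [this, hx, mul_add, add_mul, Algebra.smul_def, Algebra.smul_def]
  have hc2 : (w : A) * algebraMap K A q * ↑w⁻¹ = algebraMap K A q := by
    rw [← Algebra.commutes, mul_assoc, Units.mul_inv, mul_one]
  simp only [mul_assoc] at hc2 ⊢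
  rw [show (w:A) * ((algebraMap K A) (q-1) * (x * (↑w⁻¹:A)))
        = algebraMap K A (q-1) * ((w:A) * (x * (↑w⁻¹:A))) by
      rw [← mul_assoc, ← Algebra.commutes, mul_assoc], hc2]

end AlgLemmas

namespace AffineTL
open FreeAlgebra

section TLAlemmas
variable {K : Type*} [CommRing K] {q : K} {n : ℕ}

theorem quadA (i : Fin n) :
    gA q n i * gA q n i = (q - 1) • gA q n i + algebraMap K _ q := by
  have h := RingQuot.mkAlgHom_rel K (TLARel.quad (q := q) i)
  simpa [gA, map_mul, map_add, map_smul] using h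

theorem commA (i j : Fin n) (h : i.val + 2 ≤ j.val ∨ j.val + 2 ≤ i.val) :
    gA q n i * gA q n j = gA q n j * gA q n i := by
  have h2 := RingQuot.mkAlgHom_rel K (TLARel.comm (q := q) i j h)
  simpa [gA, map_mul] using h2

theorem braidA (i j : Fin n) (h : j.val = i.val + 1) :
    gA q n i * gA q n j * gA q n i = gA q n j * gA q n i * gA q n j := by
  have h2 := RingQuot.mkAlgHom_rel K (TLARel.braid (q := q) i j h)
  simpa [gA, map_mul] using h2

theorem vrelA (i j : Fin n) (h : j.val = i.val + 1) :
    Lel (gA q n i) (gA q n j) = 0 := by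
  have h2 := RingQuot.mkAlgHom_rel K (TLARel.vrel (q := q) i j h)
  simpa [Lel, gA, map_mul, map_add, map_one] using h2

/-- The generators of `TL_n(q)` as units. -/
noncomputable def uA (hq : IsUnit q) (i : Fin n) : (TLA K q n)ˣ where
  val := gA q n i
  inv := qinv q (gA q n i)
  val_inv := by
    have key : gA q n i * (gA q n i - algebraMap K _ (q-1)) = algebraMap K _ q := by
      rw [mul_sub, quadA, ← Algebra.commutes (q-1) (gA q n i), ← Algebra.smul_def,
        add_sub_cancel_left]
    rw [qinv, mul_smul_comm, key, Algebra.smul_def, ← map_mul,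
      Ring.inverse_mul_cancel _ hq, map_one]
  inv_val := by
    have key : (gA q n i - algebraMap K _ (q-1)) * gA q n i = algebraMap K _ q := by
      rw [sub_mul, quadA, ← Algebra.smul_def, add_sub_cancel_left]
    rw [qinv, smul_mul_assoc, key, Algebra.smul_def, ← map_mul,
      Ring.inverse_mul_cancel _ hq, map_one]

/-- Totalized generators. -/
noncomputable def uN (hq : IsUnit q) (i : ℕ) : (TLA K q n)ˣ :=
  if h : i < n then uA hq ⟨i, h⟩ else 1

theorem uN_coe (hq : IsUnit q) {i : ℕ} (h : i < n) :
    ((uN hq i : (TLA K q n)ˣ) : TLA K q n) = gA q n ⟨i, h⟩ := by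
  simp [uN, h, uA]

theorem uN_inv_coe (hq : IsUnit q) {i : ℕ} (h : i < n) :
    (((uN hq i : (TLA K q n)ˣ))⁻¹ : (TLA K q n)ˣ) = (qinv q (gA q n ⟨i, h⟩) : TLA K q n) := by
  simp [uN, h, uA]

theorem uN_one (hq : IsUnit q) {i : ℕ} (h : n ≤ i) : (uN hq i : (TLA K q n)ˣ) = 1 :=
  dif_neg (by omega)

theorem braidU (hq : IsUnit q) {i : ℕ} (h : i + 2 ≤ n) :
    uN (n := n) hq i * uN hq (i+1) * uN hq i = uN hq (i+1) * uN hq i * uN hq (i+1) := by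
  apply Units.ext
  simp only [Units.val_mul, uN_coe hq (show i < n by omega), uN_coe hq (show i+1 < n by omega)]
  exact braidA _ _ rfl

theorem commU (hq : IsUnit q) {i j : ℕ} (h : i + 2 ≤ j) :
    uN (n := n) hq i * uN hq j = uN hq j * uN hq i := by
  by_cases hj : j < n
  · apply Units.ext
    simp only [Units.val_mul, uN_coe hq hj, uN_coe hq (show i < n by omega)]
    exact commA _ _ (Or.inl h)
  · rw [uN_one hq (i := j) (by omega), mul_one, one_mul]

end TLAlemmas
end AffineTL

section MoreGroupLemmas
variable {G : Type*} [Group G]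

theorem comm_inv_right {a c : G} (h : c * a = a * c) : c * a⁻¹ = a⁻¹ * c := by
  have := congrArg (fun x => a⁻¹ * x * a⁻¹) h
  simpa [mul_assoc] using this.symm

theorem conj_braid_step {a c B : G} (hac : c * a = a * c) (hIH : c * B * c = B * c * B) :
    c * (a * B * a⁻¹) * c = (a * B * a⁻¹) * c * (a * B * a⁻¹) := by
  have hac' := comm_inv_right hac
  have e1 : c * (a * B * a⁻¹) * c = (c * a) * B * (a⁻¹ * c) := by group
  rw [e1, hac, ← hac']
  have e2 : (a * c) * B * (c * a⁻¹) = a * (c * B * c) * a⁻¹ := by group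
  rw [e2, hIH]
  have e3 : a * (B * c * B) * a⁻¹ = (a * B * a⁻¹) * (a * c * a⁻¹) * (a * B * a⁻¹) := by group
  rw [e3, show a * c * a⁻¹ = c by rw [← hac]; group]

theorem comm_conj {a c B : G} (h : c * a = a * c) :
    c * (a * B * a⁻¹) * c⁻¹ = a * (c * B * c⁻¹) * a⁻¹ := by
  have h' := comm_inv_right h
  have h'' : c⁻¹ * a⁻¹ = a⁻¹ * c⁻¹ := by
    have := congrArg (·⁻¹) h; simpa [mul_inv_rev] using this.symm
  calc c * (a * B * a⁻¹) * c⁻¹ = (c * a) * B * (a⁻¹ * c⁻¹) := by group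
    _ = (a * c) * B * (c⁻¹ * a⁻¹) := by rw [h, h'']
    _ = a * (c * B * c⁻¹) * a⁻¹ := by group

theorem braid_bottom_conj {P b c : G} (hcP : c * P = P * c) (h : c * b * c = b * c * b) :
    (P⁻¹ * (b⁻¹ * c * b) * P) * c * (P⁻¹ * (b⁻¹ * c * b) * P)
      = c * (P⁻¹ * (b⁻¹ * c * b) * P) * c := by
  have hcP' : P⁻¹ * c = c * P⁻¹ := by
    have := congrArg (fun x => P⁻¹ * x * P⁻¹) hcP
    simpa [mul_assoc] using this
  have e1 : (P⁻¹ * (b⁻¹ * c * b) * P) * c * (P⁻¹ * (b⁻¹ * c * b) * P)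
      = P⁻¹ * (b⁻¹ * c * b) * ((P * c * P⁻¹) * (b⁻¹ * c * b)) * P := by group
  have e2 : P * c * P⁻¹ = c := by rw [← hcP]; group
  rw [e1, e2]
  have e3 : P⁻¹ * (b⁻¹ * c * b) * (c * (b⁻¹ * c * b)) * P
      = P⁻¹ * ((b⁻¹ * c * b) * c * (b⁻¹ * c * b)) * P := by group
  rw [e3, braid_bottom_base _ _ h]
  have e4 : c * (P⁻¹ * (b⁻¹ * c * b) * P) * c
      = (c * P⁻¹) * ((b⁻¹ * c * b) * (P * c)) := by group
  rw [e4, ← hcP', ← hcP]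
  group
end MoreGroupLemmas

section MoreGroupLemmas2
variable {G : Type*} [Group G]

theorem conj_P_step {P x y : G} (hP : x * P = P * x) (hc : x * y * x⁻¹ = y⁻¹ * x * y) :
    x * (P⁻¹ * y * P) * x⁻¹ = (y * P)⁻¹ * x * (y * P) := by
  calc x * (P⁻¹ * y * P) * x⁻¹
      = (x * P⁻¹) * (y * (P * x⁻¹)) := by group
    _ = (P⁻¹ * x) * (y * (x⁻¹ * P)) := by rw [comm_inv_right hP, comm_inv_right hP.symm]
    _ = P⁻¹ * (x * y * x⁻¹) * P := by group
    _ = P⁻¹ * (y⁻¹ * x * y) * P := by rw [hc]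
    _ = (y * P)⁻¹ * x * (y * P) := by group
end MoreGroupLemmas2

namespace AffineTL

section Band
variable {K : Type*} [CommRing K] {q : K} {n : ℕ}

/-- The band element `a_{t-d} ⋯ a_{t-1} a_t a_{t-1}⁻¹ ⋯ a_{t-d}⁻¹` as a unit. -/
noncomputable def bndU (hq : IsUnit q) (t : ℕ) : ℕ → (TLA K q n)ˣ
  | 0 => uN hq t
  | (d+1) => uN hq (t-1-d) * bndU hq t d * (uN hq (t-1-d))⁻¹

/-- The ascending product `a_{t+1-d} ⋯ a_t` as a unit. -/
noncomputable def PU (hq : IsUnit q) (t : ℕ) : ℕ → (TLA K q n)ˣ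
  | 0 => 1
  | (d+1) => uN hq (t-d) * PU hq t d

theorem commUc (hq : IsUnit q) {i j : ℕ} (h : i + 2 ≤ j) :
    Commute (uN (n := n) hq i) (uN hq j) := commU hq h

theorem bnd_low_comm (hq : IsUnit q) (t : ℕ) :
    ∀ d j, j + 2 ≤ t - d → Commute (uN (n := n) hq j) (bndU hq t d) := by
  intro d
  induction d with
  | zero => intro j hj; exact commUc hq (by omega)
  | succ d ih =>
    intro j hj
    exact ((commUc hq (j := t-1-d) (by omega)).mul_right (ih j (by omega))).mul_right
      (commUc (n := n) hq (i := j) (j := t-1-d) (by omega)).inv_right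

theorem P_comm (hq : IsUnit q) (t : ℕ) :
    ∀ d j, j + 2 ≤ t + 1 - d → Commute (uN (n := n) hq j) (PU hq t d) := by
  intro d
  induction d with
  | zero => intro j _; exact Commute.one_right _
  | succ d ih =>
    intro j hj
    exact (commUc hq (j := t-d) (by omega)).mul_right (ih j (by omega))

theorem bnd_P_form (hq : IsUnit q) {t : ℕ} (ht : t < n) :
    ∀ d, d ≤ t → bndU (n := n) hq t d = (PU hq t d)⁻¹ * uN hq (t - d) * PU hq t d := by
  intro d
  induction d with
  | zero => intro _; show uN hq t = 1⁻¹ * uN hq (t - 0) * 1; simp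
  | succ d ih =>
    intro hd
    have hk : t - 1 - d = t - (d+1) := by omega
    have hP : uN (n := n) hq (t-(d+1)) * PU hq t d = PU hq t d * uN hq (t-(d+1)) :=
      P_comm hq t d _ (by omega)
    have hbr : uN (n := n) hq (t-(d+1)) * uN hq (t-d) * uN hq (t-(d+1))
        = uN hq (t-d) * uN hq (t-(d+1)) * uN hq (t-d) := by
      have h := braidU (n := n) hq (i := t-(d+1)) (by omega)
      rw [show t-(d+1)+1 = t-d by omega] at h
      exact h
    show uN hq (t-1-d) * bndU hq t d * (uN hq (t-1-d))⁻¹ = _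
    rw [hk, ih (by omega)]
    exact conj_P_step hP (braid_conj _ _ hbr)

end Band
end AffineTL

namespace AffineTL

section Band2
variable {K : Type*} [CommRing K] {q : K} {n : ℕ}

theorem bnd_high_comm (hq : IsUnit q) {t : ℕ} (ht : t < n) :
    ∀ d, d ≤ t → ∀ j, t - d < j → j < t → Commute (uN (n := n) hq j) (bndU hq t d) := by
  intro d
  induction d with
  | zero => intro _ j h1 h2; omega
  | succ d ih =>
    intro hd j h1 h2
    by_cases hj2 : t - 1 - d + 2 ≤ j
    · exact ((commUc hq hj2).symm.mul_right (ih (by omega) j (by omega) h2)).mul_right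
        (commUc (n := n) hq (i := t-1-d) (j := j) hj2).symm.inv_right
    · -- j = t - d
      match d, hd with
      | 0, _ => omega
      | (e+1), hd =>
        have h1' : t - 1 - (e+1) = t - 2 - e := by omega
        have h2' : t - 1 - e = t - 2 - e + 1 := by omega
        have hjj : j = t - 2 - e + 1 := by omega
        have key := braid_comm_step _ _ _ (braidU (n := n) hq (i := t-2-e) (by omega))
          ((bnd_low_comm hq t e (t-2-e) (by omega)).eq)
        have hgoal : bndU (n := n) hq t (e+1+1)
            = uN hq (t-2-e) * (uN hq (t-2-e+1) * bndU hq t e * (uN hq (t-2-e+1))⁻¹)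
              * (uN hq (t-2-e))⁻¹ := by
          show uN hq (t-1-(e+1)) * (uN hq (t-1-e) * bndU hq t e * (uN hq (t-1-e))⁻¹)
              * (uN hq (t-1-(e+1)))⁻¹ = _
          rw [h1', h2']
        rw [Commute, SemiconjBy, hjj, hgoal]
        exact key

theorem bnd_quad (hq : IsUnit q) {t : ℕ} (ht : t < n) :
    ∀ d, (↑(bndU (n := n) hq t d) : TLA K q n) * (↑(bndU (n := n) hq t d) : TLA K q n)
      = (q - 1) • (↑(bndU (n := n) hq t d) : TLA K q n) + algebraMap K _ q := by
  intro d
  induction d with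
  | zero => rw [show (↑(bndU (n := n) hq t 0) : TLA K q n) = gA q n ⟨t, ht⟩ from uN_coe hq ht]
            exact quadA _
  | succ d ih =>
    have h : bndU (n := n) hq t (d+1)
        = uN hq (t-1-d) * bndU hq t d * (uN hq (t-1-d))⁻¹ := rfl
    rw [h, Units.val_mul, Units.val_mul]
    exact conj_quad q _ ih

theorem bnd_braid_top (hq : IsUnit q) {t : ℕ} (ht : t < n) :
    ∀ d, d ≤ t → uN (n := n) hq t * bndU hq t d * uN hq t
      = bndU hq t d * uN hq t * bndU hq t d := by
  intro d
  induction d with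
  | zero => intro _; rfl
  | succ d ih =>
    intro hd
    match d, ih, hd with
    | 0, _, hd =>
      have hbr : uN (n := n) hq (t-1) * uN hq t * uN hq (t-1)
          = uN hq t * uN hq (t-1) * uN hq t := by
        have h := braidU (n := n) hq (i := t-1) (by omega)
        rw [show t-1+1 = t by omega] at h
        exact h
      show uN hq t * (uN hq (t-1-0) * uN hq t * (uN hq (t-1-0))⁻¹) * uN hq t = _
      exact braid_top_base _ _ hbr
    | (e+1), ih, hd =>
      have hcm : uN (n := n) hq t * uN hq (t-1-(e+1)) = uN hq (t-1-(e+1)) * uN hq t :=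
        (commUc hq (i := t-1-(e+1)) (by omega)).symm
      exact conj_braid_step hcm (ih (by omega))

theorem bnd_braid_bottom (hq : IsUnit q) {t : ℕ} (ht : t < n) {d : ℕ}
    (hd1 : 1 ≤ d) (hd : d ≤ t) :
    bndU (n := n) hq t d * uN hq (t-d) * bndU hq t d
      = uN hq (t-d) * bndU hq t d * uN hq (t-d) := by
  obtain ⟨e, rfl⟩ : ∃ e, d = e + 1 := ⟨d - 1, by omega⟩
  have hP : PU (n := n) hq t (e+1) = uN hq (t-(e+1)+1) * PU hq t e := by
    show uN hq (t-e) * _ = _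
    rw [show t-e = t-(e+1)+1 by omega]
  have hform : bndU (n := n) hq t (e+1)
      = (PU hq t e)⁻¹ * ((uN hq (t-(e+1)+1))⁻¹ * uN hq (t-(e+1)) * uN hq (t-(e+1)+1))
        * PU hq t e := by
    rw [bnd_P_form hq ht (e+1) hd, hP]
    group
  have hcP : uN (n := n) hq (t-(e+1)) * PU hq t e = PU hq t e * uN hq (t-(e+1)) :=
    (P_comm hq t e _ (by omega)).eq
  have hbr : uN (n := n) hq (t-(e+1)) * uN hq (t-(e+1)+1) * uN hq (t-(e+1))
      = uN hq (t-(e+1)+1) * uN hq (t-(e+1)) * uN hq (t-(e+1)+1) :=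
    braidU hq (by omega)
  rw [hform]
  exact braid_bottom_conj hcP hbr

theorem bnd_square (hq : IsUnit q) {t : ℕ} (h1 : 1 ≤ t) (ht : t < n) :
    ∀ d, 1 ≤ d → d ≤ t →
      uN (n := n) hq t * bndU hq t d * (uN hq t)⁻¹ = bndU hq (t-1) (d-1) := by
  intro d
  induction d with
  | zero => omega
  | succ d ih =>
    intro _ hd
    match d, ih, hd with
    | 0, _, hd =>
      have hbr : uN (n := n) hq t * uN hq (t-1) * uN hq t
          = uN hq (t-1) * uN hq t * uN hq (t-1) := by
        have h := braidU (n := n) hq (i := t-1) (by omega)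
        rw [show t-1+1 = t by omega] at h
        exact h.symm
      show uN hq t * (uN hq (t-1-0) * uN hq t * (uN hq (t-1-0))⁻¹) * (uN hq t)⁻¹
          = uN hq (t-1)
      exact braid_square _ _ hbr
    | (e+1), ih, hd =>
      have hcm : uN (n := n) hq t * uN hq (t-1-(e+1)) = uN hq (t-1-(e+1)) * uN hq t :=
        (commUc hq (i := t-1-(e+1)) (by omega)).symm
      show uN hq t * (uN hq (t-1-(e+1)) * bndU hq t (e+1) * (uN hq (t-1-(e+1)))⁻¹)
            * (uN hq t)⁻¹ = bndU hq (t-1) (e+1)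
      calc uN hq t * (uN hq (t-1-(e+1)) * bndU hq t (e+1) * (uN hq (t-1-(e+1)))⁻¹)
            * (uN hq t)⁻¹
          = uN hq (t-1-(e+1)) * (uN hq t * bndU hq t (e+1) * (uN hq t)⁻¹)
            * (uN hq (t-1-(e+1)))⁻¹ := comm_conj hcm
        _ = uN hq (t-1-(e+1)) * bndU hq (t-1) e * (uN hq (t-1-(e+1)))⁻¹ := by
            rw [ih (by omega) (by omega)]
            rfl
        _ = bndU hq (t-1) (e+1) := by
            show _ = uN hq (t-1-1-e) * bndU hq (t-1) e * (uN hq (t-1-1-e))⁻¹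
            rw [show t-1-1-e = t-1-(e+1) by omega]

end Band2
end AffineTL

section LelU
variable {K : Type*} [CommRing K] {A : Type*} [Ring A] [Algebra K A]

theorem Lel_conj_u (w x y : Aˣ) :
    Lel ((↑(w * x * w⁻¹) : A)) (↑(w * y * w⁻¹)) = (w : A) * Lel (x : A) (y : A) * ↑w⁻¹ := by
  simp only [Units.val_mul]
  exact Lel_conj w x y
end LelU

namespace AffineTL

section Band3
variable {K : Type*} [CommRing K] {q : K} {n : ℕ}

theorem uN_vrel (hq : IsUnit q) {i : ℕ} (h : i + 2 ≤ n) :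
    Lel ((uN (n := n) hq i : TLA K q n)) (↑(uN (n := n) hq (i+1))) = 0 := by
  rw [uN_coe hq (show i < n by omega), uN_coe hq (show i + 1 < n by omega)]
  exact vrelA ⟨i, by omega⟩ ⟨i+1, by omega⟩ rfl

theorem uN_braid_coe (hq : IsUnit q) {i : ℕ} (h : i + 2 ≤ n) :
    (uN (n := n) hq i : TLA K q n) * ↑(uN (n := n) hq (i+1)) * ↑(uN (n := n) hq i)
      = ↑(uN (n := n) hq (i+1)) * ↑(uN (n := n) hq i) * ↑(uN (n := n) hq (i+1)) := by
  have h2 := congrArg (Units.val) (braidU (n := n) hq h)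
  simpa only [Units.val_mul] using h2

theorem bnd_vrel_top (hq : IsUnit q) {t : ℕ} (ht : t < n) :
    ∀ d, 1 ≤ d → d ≤ t → Lel ((uN (n := n) hq t : TLA K q n)) ((bndU (n := n) hq t d : (TLA K q n)ˣ) : TLA K q n) = 0 := by
  intro d
  induction d with
  | zero => omega
  | succ d ih =>
    intro _ hd
    match d, ih, hd with
    | 0, _, hd =>
      have hbr : uN (n := n) hq (t-1) * uN hq t * uN hq (t-1)
          = uN hq t * uN hq (t-1) * uN hq t := by
        have h := braidU (n := n) hq (i := t-1) (by omega)
        rw [show t-1+1 = t by omega] at h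
        exact h
      have hc : bndU (n := n) hq t 1 = (uN hq t)⁻¹ * uN hq (t-1) * uN hq t := by
        show uN hq (t-1-0) * uN hq t * (uN hq (t-1-0))⁻¹ = _
        exact braid_conj _ _ hbr
      have hL := Lel_conj_u ((uN (n := n) hq t)⁻¹) (uN hq t) (uN hq (t-1))
      rw [show (uN (n := n) hq t)⁻¹ * uN hq t * ((uN hq t)⁻¹)⁻¹ = uN hq t by group,
        show (uN (n := n) hq t)⁻¹ * uN hq (t-1) * ((uN hq t)⁻¹)⁻¹ = bndU hq t 1 by
          rw [inv_inv]; exact hc.symm] at hL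
      rw [hL]
      have hsy : Lel ((uN (n := n) hq t : TLA K q n)) (↑(uN (n := n) hq (t-1))) = 0 := by
        rw [Lel_symm (by
          have h2 := congrArg (Units.val) hbr.symm
          simpa only [Units.val_mul] using h2)]
        have h3 := uN_vrel (n := n) hq (i := t-1) (by omega)
        rw [show t-1+1 = t by omega] at h3
        exact h3
      rw [hsy, mul_zero, zero_mul]
    | (e+1), ih, hd =>
      have hcm : uN (n := n) hq (t-1-(e+1)) * uN hq t = uN hq t * uN hq (t-1-(e+1)) :=
        commUc hq (by omega)
      have hL := Lel_conj_u (uN (n := n) hq (t-1-(e+1))) (uN hq t) (bndU hq t (e+1))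
      rw [show uN (n := n) hq (t-1-(e+1)) * uN hq t * (uN hq (t-1-(e+1)))⁻¹ = uN hq t by
            rw [hcm]; group,
        show uN (n := n) hq (t-1-(e+1)) * bndU hq t (e+1) * (uN hq (t-1-(e+1)))⁻¹
            = bndU hq t (e+1+1) from rfl] at hL
      rw [hL, ih (by omega) (by omega), mul_zero, zero_mul]

theorem bnd_vrel_bottom (hq : IsUnit q) {t : ℕ} (ht : t < n) {d : ℕ}
    (hd1 : 1 ≤ d) (hd : d ≤ t) :
    Lel ((↑(bndU (n := n) hq t d) : TLA K q n)) (↑(uN (n := n) hq (t-d))) = 0 := by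
  obtain ⟨e, rfl⟩ : ∃ e, d = e + 1 := ⟨d - 1, by omega⟩
  have hP : PU (n := n) hq t (e+1) = uN hq (t-(e+1)+1) * PU hq t e := by
    show uN hq (t-e) * _ = _
    rw [show t-e = t-(e+1)+1 by omega]
  have hform : bndU (n := n) hq t (e+1)
      = (PU hq t e)⁻¹ * ((uN hq (t-(e+1)+1))⁻¹ * uN hq (t-(e+1)) * uN hq (t-(e+1)+1))
        * PU hq t e := by
    rw [bnd_P_form hq ht (e+1) hd, hP]
    group
  have hcP : uN (n := n) hq (t-(e+1)) * PU hq t e = PU hq t e * uN hq (t-(e+1)) :=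
    (P_comm hq t e _ (by omega)).eq
  have hbr : uN (n := n) hq (t-(e+1)) * uN hq (t-(e+1)+1) * uN hq (t-(e+1))
      = uN hq (t-(e+1)+1) * uN hq (t-(e+1)) * uN hq (t-(e+1)+1) :=
    braidU hq (by omega)
  have h1 := Lel_conj_u ((PU (n := n) hq t e)⁻¹)
    ((uN hq (t-(e+1)+1))⁻¹ * uN hq (t-(e+1)) * uN hq (t-(e+1)+1)) (uN hq (t-(e+1)))
  rw [show (PU (n := n) hq t e)⁻¹
        * ((uN hq (t-(e+1)+1))⁻¹ * uN hq (t-(e+1)) * uN hq (t-(e+1)+1))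
        * ((PU hq t e)⁻¹)⁻¹ = bndU hq t (e+1) by rw [inv_inv]; exact hform.symm,
    show (PU (n := n) hq t e)⁻¹ * uN hq (t-(e+1)) * ((PU hq t e)⁻¹)⁻¹ = uN hq (t-(e+1)) by
      rw [inv_inv, mul_assoc, hcP]; group] at h1
  rw [h1]
  have h2 := Lel_conj_u (uN (n := n) hq (t-(e+1))) (uN hq (t-(e+1)+1)) (uN hq (t-(e+1)))
  rw [show uN (n := n) hq (t-(e+1)) * uN hq (t-(e+1)+1) * (uN hq (t-(e+1)))⁻¹
        = (uN hq (t-(e+1)+1))⁻¹ * uN hq (t-(e+1)) * uN hq (t-(e+1)+1) from braid_conj _ _ hbr,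
    show uN (n := n) hq (t-(e+1)) * uN hq (t-(e+1)) * (uN hq (t-(e+1)))⁻¹ = uN hq (t-(e+1)) by
      group] at h2
  rw [h2]
  have h3 : Lel ((uN (n := n) hq (t-(e+1)+1) : TLA K q n)) (↑(uN (n := n) hq (t-(e+1)))) = 0 := by
    have h4 : (uN (n := n) hq (t-(e+1)+1) : TLA K q n) * ↑(uN (n := n) hq (t-(e+1)))
        * ↑(uN (n := n) hq (t-(e+1)+1))
        = ↑(uN (n := n) hq (t-(e+1))) * ↑(uN (n := n) hq (t-(e+1)+1))
          * ↑(uN (n := n) hq (t-(e+1))) := by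
      have h5 := congrArg (Units.val) hbr.symm
      simpa only [Units.val_mul] using h5
    rw [Lel_symm h4]
    exact uN_vrel hq (by omega)
  rw [h3, mul_zero, zero_mul, mul_zero, zero_mul]

end Band3
end AffineTL

namespace AffineTL

section Band4
variable {K : Type*} [CommRing K] {q : K} {n : ℕ}

theorem bnd_list (hq : IsUnit q) {t : ℕ} (ht : t < n) :
    ∀ d, d ≤ t → (↑(bndU (n := n) hq t d) : TLA K q n) =
      (List.ofFn fun j : Fin d => (↑(uN (n := n) hq (t - d + j.val)) : TLA K q n)).prod
        * ↑(uN (n := n) hq t)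
        * (List.ofFn fun j : Fin d => (↑((uN (n := n) hq (t - 1 - j.val))⁻¹) : TLA K q n)).prod
    := by
  intro d
  induction d with
  | zero => intro _; simp [bndU]
  | succ d ih =>
    intro hd
    have hlhs : (↑(bndU (n := n) hq t (d+1)) : TLA K q n)
        = ↑(uN (n := n) hq (t-1-d)) * ↑(bndU (n := n) hq t d)
          * ↑((uN (n := n) hq (t-1-d))⁻¹) := by
      rw [show bndU (n := n) hq t (d+1)
          = uN hq (t-1-d) * bndU hq t d * (uN hq (t-1-d))⁻¹ from rfl]
      simp only [Units.val_mul]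
    rw [hlhs, ih (by omega)]
    have hasc : (List.ofFn fun j : Fin (d+1) => (↑(uN (n := n) hq (t - (d+1) + j.val)) : TLA K q n))
        = (↑(uN (n := n) hq (t-1-d)) : TLA K q n)
          :: (List.ofFn fun j : Fin d => (↑(uN (n := n) hq (t - d + j.val)) : TLA K q n)) := by
      rw [List.ofFn_succ]
      congr 1
      · rw [show t - (d+1) + (0 : Fin (d+1)).val = t-1-d by simp; omega]
      · exact congrArg List.ofFn (funext fun j => by
          rw [show t - (d+1) + (j.succ).val = t - d + j.val by rw [Fin.val_succ]; omega])
    have hdesc : (List.ofFn fun j : Fin (d+1) =>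
          (↑((uN (n := n) hq (t - 1 - j.val))⁻¹) : TLA K q n))
        = (List.ofFn fun j : Fin d => (↑((uN (n := n) hq (t - 1 - j.val))⁻¹) : TLA K q n)).concat
            (↑((uN (n := n) hq (t-1-d))⁻¹) : TLA K q n) := by
      rw [List.ofFn_succ']
      congr 1
    rw [hasc, hdesc, List.prod_cons, List.prod_concat]
    simp only [mul_assoc]

theorem bnd_coe_eq (hq : IsUnit q) {t : ℕ} (ht : t < n) :
    (↑(bndU (n := n) hq t t) : TLA K q n) =
      (List.ofFn fun j : Fin t => gA q n ⟨j.val, by omega⟩).prod * gA q n ⟨t, ht⟩ *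
      (List.ofFn fun j : Fin t => qinv q (gA q n ⟨t - 1 - j.val, by omega⟩)).prod := by
  rw [bnd_list hq ht t le_rfl]
  have h1 : (List.ofFn fun j : Fin t => (↑(uN (n := n) hq (t - t + j.val)) : TLA K q n))
      = List.ofFn fun j : Fin t => gA q n ⟨j.val, by omega⟩ :=
    congrArg List.ofFn (funext fun j => by
      rw [show t - t + j.val = j.val by omega]
      exact uN_coe hq (show j.val < n by have := j.isLt; omega))
  have h2 : (List.ofFn fun j : Fin t => (↑((uN (n := n) hq (t - 1 - j.val))⁻¹) : TLA K q n))
      = List.ofFn fun j : Fin t => qinv q (gA q n ⟨t - 1 - j.val, by omega⟩) :=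
    congrArg List.ofFn (funext fun j =>
      uN_inv_coe hq (show t - 1 - j.val < n by omega))
  rw [h1, h2, uN_coe hq ht]

end Band4

section Ext
variable {K : Type*} [CommRing K] {q : K} {m : ℕ}

theorem ATL_hom_ext {A : Type*} [Semiring A] [Algebra K A] {f h : ATL K q m →ₐ[K] A}
    (hyp : ∀ i, f (g q m i) = h (g q m i)) : f = h := by
  apply RingQuot.ringQuot_ext'
  apply FreeAlgebra.hom_ext
  funext i
  simpa [g, Function.comp] using hyp i

theorem TLA_hom_ext {A : Type*} [Semiring A] [Algebra K A] {f h : TLA K q m →ₐ[K] A}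
    (hyp : ∀ i, f (gA q m i) = h (gA q m i)) : f = h := by
  apply RingQuot.ringQuot_ext'
  apply FreeAlgebra.hom_ext
  funext i
  simpa [gA, Function.comp] using hyp i

theorem qinv_natural {A B : Type*} [Ring A] [Ring B] [Algebra K A] [Algebra K B]
    (φ : A →ₐ[K] B) (x : A) : φ (qinv q x) = qinv q (φ x) := by
  simp [qinv, map_smul, map_sub, AlgHom.commutes]

end Ext
end AffineTL

namespace AffineTL
open FreeAlgebra

section Econs
variable {K : Type*} [CommRing K] {q : K} {n : ℕ}

/-- The images of the generators of `TLhat_{n+1}(q)` under `E_n`. -/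
noncomputable def Etgt (hq : IsUnit q) (i : Fin (n+1)) : TLA K q n :=
  if h : i.val < n then gA q n ⟨i.val, h⟩ else ↑(bndU (n := n) hq (n-1) (n-1))

theorem Etgt_val (hq : IsUnit q) (i : Fin (n+1)) {a : ℕ} (hv : i.val = a) (h : a < n) :
    Etgt hq i = gA q n ⟨a, h⟩ := by
  subst hv; exact dif_pos h

theorem Etgt_last (hq : IsUnit q) (i : Fin (n+1)) (hv : i.val = n) :
    Etgt hq i = ↑(bndU (n := n) hq (n-1) (n-1)) := by
  have : ¬ i.val < n := by omega
  exact dif_neg this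

theorem Etgt_rel (hq : IsUnit q) (hn : 1 ≤ n) :
    ∀ ⦃x y : FreeAlgebra K (Fin (n+1))⦄, ATLRel q (n+1) x y →
      (FreeAlgebra.lift K (Etgt (n := n) hq)) x = (FreeAlgebra.lift K (Etgt hq)) y := by
  have ht : n - 1 < n := by omega
  intro x y hxy
  cases hxy with
  | degen h i => omega
  | quad h i =>
    simp only [map_mul, map_add, map_smul, AlgHom.commutes, lift_ι_apply]
    by_cases hi : i.val < n
    · rw [Etgt_val hq i rfl hi]; exact quadA _
    · rw [Etgt_last hq i (by omega)]; exact bnd_quad hq ht (n-1)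
  | comm h i j h1 h2 h3 =>
    simp only [map_mul, lift_ι_apply]
    have h2' : j.val ≠ (i.val + 1) % (n+1) := fun hv => h2 (Fin.ext hv)
    have h3' : i.val ≠ (j.val + 1) % (n+1) := fun hv => h3 (Fin.ext hv)
    have h1' : i.val ≠ j.val := fun hv => h1 (Fin.ext hv)
    have hcomm : ∀ a : ℕ, (_ : 0 < a) → (_ : a < n - 1) →
        gA q n ⟨a, by omega⟩ * (↑(bndU (n := n) hq (n-1) (n-1)) : TLA K q n)
          = ↑(bndU (n := n) hq (n-1) (n-1)) * gA q n ⟨a, by omega⟩ := by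
      intro a ha1 ha2
      have hc := bnd_high_comm hq ht (n-1) le_rfl a (by omega) (by omega)
      have := congrArg (Units.val) hc.eq
      simp only [Units.val_mul] at this
      rw [uN_coe hq (show a < n by omega)] at this
      exact this
    by_cases hi : i.val < n
    · by_cases hj : j.val < n
      · rw [Etgt_val hq i rfl hi, Etgt_val hq j rfl hj]
        rw [Nat.mod_eq_of_lt (by omega)] at h2'
        rw [Nat.mod_eq_of_lt (by omega)] at h3'
        exact commA _ _ (by simp only; omega)
      · -- j = last
        have hjv : j.val = n := by omega
        rw [Nat.mod_eq_of_lt (by omega)] at h2'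
        have h3'' : i.val ≠ 0 := by
          rw [hjv, Nat.mod_self] at h3'; exact h3'
        rw [Etgt_val hq i rfl hi, Etgt_last hq j hjv]
        exact hcomm i.val (by omega) (by omega)
    · by_cases hj : j.val < n
      · have hiv : i.val = n := by omega
        rw [Nat.mod_eq_of_lt (by omega)] at h3'
        have h2'' : j.val ≠ 0 := by
          rw [hiv, Nat.mod_self] at h2'; exact h2'
        rw [Etgt_val hq j rfl hj, Etgt_last hq i hiv]
        exact (hcomm j.val (by omega) (by omega)).symm
      · exact absurd (Fin.ext (by omega : i.val = j.val)) h1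
  | braid h i =>
    simp only [map_mul, lift_ι_apply]
    rcases lt_trichotomy i.val (n-1) with hi | hi | hi
    · have hcs : (csucc i).val = i.val + 1 := Nat.mod_eq_of_lt (by omega)
      rw [Etgt_val hq i rfl (by omega), Etgt_val hq (csucc i) hcs (by omega)]
      exact braidA _ _ rfl
    · have hcs : (csucc i).val = n := by
        show (i.val + 1) % (n+1) = n
        rw [Nat.mod_eq_of_lt (by omega)]; omega
      rw [Etgt_val hq i hi ht, Etgt_last hq (csucc i) hcs]
      have hb := bnd_braid_top hq ht (n-1) le_rfl
      have := congrArg (Units.val) hb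
      simp only [Units.val_mul, uN_coe hq ht] at this
      exact this
    · have hiv : i.val = n := by omega
      have hcs : (csucc i).val = 0 := by
        show (i.val + 1) % (n+1) = 0
        rw [hiv, Nat.mod_self]
      rw [Etgt_last hq i hiv, Etgt_val hq (csucc i) hcs (by omega)]
      have hb := bnd_braid_bottom hq ht (show 1 ≤ n-1 by omega) (le_refl (n-1))
      have := congrArg (Units.val) hb
      simp only [Units.val_mul] at this
      rw [show n-1-(n-1) = 0 by omega, uN_coe hq (show 0 < n by omega)] at this
      exact this
  | vrel h i =>
    simp only [map_add, map_mul, map_one, map_zero, lift_ι_apply]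
    show Lel (Etgt hq i) (Etgt hq (csucc i)) = 0
    rcases lt_trichotomy i.val (n-1) with hi | hi | hi
    · have hcs : (csucc i).val = i.val + 1 := Nat.mod_eq_of_lt (by omega)
      rw [Etgt_val hq i rfl (by omega), Etgt_val hq (csucc i) hcs (by omega)]
      exact vrelA _ _ rfl
    · have hcs : (csucc i).val = n := by
        show (i.val + 1) % (n+1) = n
        rw [Nat.mod_eq_of_lt (by omega)]; omega
      rw [Etgt_val hq i hi ht, Etgt_last hq (csucc i) hcs]
      have hv := bnd_vrel_top hq ht (n-1) (by omega) le_rfl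
      rw [uN_coe hq ht] at hv
      exact hv
    · have hiv : i.val = n := by omega
      have hcs : (csucc i).val = 0 := by
        show (i.val + 1) % (n+1) = 0
        rw [hiv, Nat.mod_self]
      rw [Etgt_last hq i hiv, Etgt_val hq (csucc i) hcs (by omega)]
      have hv := bnd_vrel_bottom hq ht (show 1 ≤ n-1 by omega) (le_refl (n-1))
      rw [show n-1-(n-1) = 0 by omega, uN_coe hq (show 0 < n by omega)] at hv
      exact hv
end Econs
end AffineTL

namespace AffineTL
open FreeAlgebra

section Efinal
variable {K : Type*} [CommRing K] {q : K} {n : ℕ}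

/-- The homomorphism `E_n`. -/
noncomputable def Edef (hq : IsUnit q) (hn : 1 ≤ n) : ATL K q (n+1) →ₐ[K] TLA K q n :=
  RingQuot.liftAlgHom K ⟨FreeAlgebra.lift K (Etgt hq), Etgt_rel hq hn⟩

theorem Edef_g (hq : IsUnit q) (hn : 1 ≤ n) (i : Fin (n+1)) :
    Edef hq hn (g q (n+1) i) = Etgt hq i := by
  rw [g, Edef, RingQuot.liftAlgHom_mkAlgHom_apply, lift_ι_apply]

theorem isE_Edef (hq : IsUnit q) (hn : 1 ≤ n) : isE q n hn (Edef hq hn) := by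
  constructor
  · intro i
    rw [Edef_g, Etgt_val hq i.castSucc (Fin.coe_castSucc i) i.isLt]
    try exact congrArg (gA q n) (Fin.ext rfl)
  · rw [Edef_g, Etgt_last hq (Fin.last n) rfl,
      bnd_coe_eq hq (show n - 1 < n by omega)]
    try exact congrArg₂ (· * ·) rfl (congrArg List.prod (congrArg List.ofFn (funext fun j =>
      congrArg (qinv q) (congrArg (gA q n)
        (Fin.ext (show n-1-1-j.val = n-2-j.val by omega))))))

theorem isE_unique (hq : IsUnit q) (hn : 1 ≤ n) {E E' : ATL K q (n+1) →ₐ[K] TLA K q n}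
    (hE : isE q n hn E) (hE' : isE q n hn E') : E = E' := by
  apply ATL_hom_ext
  intro i
  induction i using Fin.lastCases with
  | last => rw [hE.2, hE'.2]
  | cast j => rw [hE.1 j, hE'.1 j]

theorem isE_surj (hn : 1 ≤ n) {E : ATL K q (n+1) →ₐ[K] TLA K q n}
    (hE : isE q n hn E) : Function.Surjective E := by
  intro x
  obtain ⟨y, rfl⟩ := RingQuot.mkAlgHom_surjective K (TLARel q n) x
  induction y using FreeAlgebra.induction with
  | grade0 r => exact ⟨algebraMap K _ r, by simp⟩
  | grade1 i => exact ⟨g q (n+1) i.castSucc, hE.1 i⟩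
  | mul a b iha ihb =>
    obtain ⟨za, hza⟩ := iha
    obtain ⟨zb, hzb⟩ := ihb
    exact ⟨za * zb, by rw [map_mul, hza, hzb, map_mul]⟩
  | add a b iha ihb =>
    obtain ⟨za, hza⟩ := iha
    obtain ⟨zb, hzb⟩ := ihb
    exact ⟨za + zb, by rw [map_add, hza, hzb, map_add]⟩

theorem isE_retract (hn : 1 ≤ n) {E : ATL K q (n+1) →ₐ[K] TLA K q n}
    (hE : isE q n hn E) (incl : TLA K q n →ₐ[K] ATL K q (n+1))
    (hincl : ∀ i : Fin n, incl (gA q n i) = g q (n+1) i.castSucc) :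
    E.comp incl = AlgHom.id K (TLA K q n) := by
  apply TLA_hom_ext
  intro i
  rw [AlgHom.comp_apply, hincl i, hE.1 i, AlgHom.id_apply]

theorem isE_square (hq : IsUnit q) (hn : 1 ≤ n)
    {E : ATL K q (n+1) →ₐ[K] TLA K q n} (hE : isE q n hn E)
    {E' : ATL K q (n+2) →ₐ[K] TLA K q (n+1)} (hE' : isE q (n+1) (Nat.le_add_left 1 n) E')
    {F : ATL K q (n+1) →ₐ[K] ATL K q (n+2)} (hF : isF q (n+1) (Nat.succ_le_succ hn) F)
    {J : TLA K q n →ₐ[K] TLA K q (n+1)}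
    (hJ : ∀ i : Fin n, J (gA q n i) = gA q (n+1) i.castSucc) :
    E'.comp F = J.comp E := by
  have hq' : IsUnit q := hq
  apply ATL_hom_ext
  intro i
  simp only [AlgHom.comp_apply]
  induction i using Fin.lastCases with
  | cast j =>
    have hFj : F (g q (n+1) j.castSucc) = g q (n+2) ⟨j.val, by omega⟩ := by
      have h := hF.1 j.val (by omega)
      rw [show (⟨j.val, by omega⟩ : Fin (n+1)) = j.castSucc from Fin.ext rfl] at h
      exact h
    rw [hFj, hE.1 j,
      show (⟨j.val, by omega⟩ : Fin (n+2)) = (⟨j.val, by omega⟩ : Fin (n+1)).castSucc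
        from Fin.ext rfl,
      hE'.1 ⟨j.val, by omega⟩, hJ j]
    exact congrArg (gA q (n+1)) (Fin.ext rfl)
  | last =>
    -- left hand side
    have hF2 : F (g q (n+1) (Fin.last n)) =
        g q (n+2) ⟨n, by omega⟩ * g q (n+2) ⟨n+1, by omega⟩ *
          qinv q (g q (n+2) ⟨n, by omega⟩) := hF.2
    have hE'n : E' (g q (n+2) ⟨n, by omega⟩) = gA q (n+1) ⟨n, by omega⟩ := by
      have h := hE'.1 ⟨n, by omega⟩
      exact h
    have hE'l : E' (g q (n+2) ⟨n+1, by omega⟩)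
        = (↑(bndU (n := n+1) hq (n) (n)) : TLA K q (n+1)) := by
      have h := hE'.2
      rw [show (Fin.last (n+1)) = (⟨n+1, by omega⟩ : Fin (n+2)) from Fin.ext rfl] at h
      rw [h, bnd_coe_eq hq (show n < n + 1 by omega)]
      rfl
    have hsq := bnd_square (n := n+1) hq (t := n) hn (by omega) n hn le_rfl
    have hsq' := congrArg (Units.val) hsq
    simp only [Units.val_mul] at hsq'
    rw [hF2, map_mul, map_mul, qinv_natural, hE'n, hE'l,
      show gA q (n+1) ⟨n, by omega⟩ = ↑(uN (n := n+1) hq n) from (uN_coe hq (by omega)).symm,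
      show qinv q (↑(uN (n := n+1) hq n) : TLA K q (n+1)) = ↑((uN (n := n+1) hq n)⁻¹) by
        rw [uN_inv_coe hq (show n < n+1 by omega), uN_coe hq (show n < n+1 by omega)],
      hsq']
    -- right hand side
    rw [hE.2, map_mul, map_mul, map_list_prod, map_list_prod, List.map_ofFn, List.map_ofFn]
    rw [bnd_coe_eq hq (show n - 1 < n + 1 by omega)]
    congr 1
    · congr 1
      · exact congrArg List.prod (congrArg List.ofFn (funext fun j => by
          show _ = J (gA q n ⟨j.val, by omega⟩)
          rw [hJ ⟨j.val, by omega⟩]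
          exact congrArg (gA q (n+1)) (Fin.ext rfl)))
      · show _ = J (gA q n ⟨n-1, by omega⟩)
        rw [hJ ⟨n-1, by omega⟩]
        exact congrArg (gA q (n+1)) (Fin.ext rfl)
    · exact congrArg List.prod (congrArg List.ofFn (funext fun j => by
        show _ = J (qinv q (gA q n ⟨n-2-j.val, by omega⟩))
        rw [qinv_natural, hJ ⟨n-2-j.val, by omega⟩]
        exact congrArg (qinv q) (congrArg (gA q (n+1))
          (Fin.ext (by simp only [Fin.coe_castSucc]; omega)))))

end Efinal
end AffineTL

open AffineTL in
/-- for every `n ≥ 1` there is a unique homomorphism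
`E_n : TLhat_{n+1}(q) → TL_n(q)` with the prescribed values on generators; it is
surjective, it retracts the canonical inclusion `TL_n(q) → TLhat_{n+1}(q)`, and the square
`E_{n+1} ∘ F_{n+1} = ι_{n+1} ∘ E_n` commutes (this is the square `E_n ∘ F_n = ι_n ∘ E_{n−1}`
of the paper, for all indices `≥ 2`). -/
theorem statement1 {K : Type*} [CommRing K] [IsDomain K] [CharZero K]
    (q sq : K) (hsq : sq * sq = q) (hq : IsUnit q) (hq1 : IsUnit (q + 1))
    (n : ℕ) (hn : 1 ≤ n) :
    (∃! E : ATL K q (n + 1) →ₐ[K] TLA K q n, isE q n hn E) ∧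
    (∀ E : ATL K q (n + 1) →ₐ[K] TLA K q n, isE q n hn E →
      -- `E_n` is surjective
      Function.Surjective E ∧
      -- `E_n` retracts the canonical inclusion `TL_n(q) → TLhat_{n+1}(q)`
      (∀ incl : TLA K q n →ₐ[K] ATL K q (n + 1),
        (∀ i : Fin n, incl (gA q n i) = g q (n + 1) i.castSucc) →
        E.comp incl = AlgHom.id K (TLA K q n)) ∧
      -- the commuting square `E_{n+1} ∘ F_{n+1} = ι_{n+1} ∘ E_n`
      (∀ E' : ATL K q (n + 2) →ₐ[K] TLA K q (n + 1),
        isE q (n + 1) (by omega) E' →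
        ∀ F : ATL K q (n + 1) →ₐ[K] ATL K q (n + 2),
          isF q (n + 1) (by omega) F →
          ∀ ι : TLA K q n →ₐ[K] TLA K q (n + 1),
            (∀ i : Fin n, ι (gA q n i) = gA q (n + 1) i.castSucc) →
            E'.comp F = ι.comp E)) := by
  
  refine ⟨⟨Edef hq hn, isE_Edef hq hn, fun E' hE' => isE_unique hq hn hE' (isE_Edef hq hn)⟩, ?_⟩
  intro E hE
  refine ⟨isE_surj hn hE, fun incl hincl => isE_retract hn hE incl hincl, ?_⟩
  intro E' hE' F hF J hJ
  exact isE_square hq hn hE hE' hF hJ
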